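/- Let t < 0 and let z(t,x) be the unique real root of x = t·z − z³. Then the third derivative satisfies z_{xxx} = 6/(t−3z²)⁴ − 108 z²/((t−3z²)⁴(3z²−t)), and z_{xxx} ∈ [−36/(t−3z²)⁴, 6/(t−3z²)⁴]; in particular |z_{xxx}| ≤ 36·t^{−4}. -/

import Mathlib

/-- For `t < 0`, the third derivative of the root `z(t,·)` of `x = t·z − z³`
equals `6/(t−3z²)⁴ − 108 z²/((t−3z²)⁴(3z²−t))`, lies in
`[−36/(t−3z²)⁴, 6/(t−3z²)⁴]`, and in particular `|z_xxx| ≤ 36·t⁻⁴`. -/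
theorem backward_burgers_root_third_derivative (t : ℝ) (ht : t < 0)
    (Z : ℝ → ℝ) (hZ : ∀ x : ℝ, x = t * Z x - (Z x) ^ 3) (x : ℝ) :
    deriv (deriv (deriv Z)) x
      = 6 / (t - 3 * (Z x) ^ 2) ^ 4
        - 108 * (Z x) ^ 2 / ((t - 3 * (Z x) ^ 2) ^ 4 * (3 * (Z x) ^ 2 - t)) ∧
    deriv (deriv (deriv Z)) x ∈
      Set.Icc (-36 / (t - 3 * (Z x) ^ 2) ^ 4) (6 / (t - 3 * (Z x) ^ 2) ^ 4) ∧
    |deriv (deriv (deriv Z)) x| ≤ 36 / t ^ 4 := by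
  set g : ℝ → ℝ := fun z => t * z - z ^ 3 with hgdef
  have hgZ : ∀ y, g (Z y) = y := fun y => (hZ y).symm
  have hd : ∀ z : ℝ, t - 3 * z ^ 2 < 0 := fun z => by nlinarith [sq_nonneg z]
  have hg' : ∀ z : ℝ, HasDerivAt g (t - 3 * z ^ 2) z := by
    intro z
    have h1 := (hasDerivAt_id z).const_mul t
    have h2 := hasDerivAt_pow 3 z
    have := h1.sub h2
    simpa [hgdef, Pi.sub_def] using this.sub (hasDerivAt_const z 0)
  have hanti : StrictAnti g := by
    intro a b hab
    simp only [hgdef]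
    nlinarith [sq_nonneg (a + b), sq_nonneg a, sq_nonneg b]
  have hZanti : StrictAnti Z := by
    intro a b hab
    by_contra h
    push_neg at h
    rcases lt_or_eq_of_le h with h' | h'
    · have := hanti h'
      rw [hgZ, hgZ] at this; linarith
    · have : a = b := by rw [← hgZ a, ← hgZ b, h']
      linarith
  have hZsurj : Function.Surjective Z := fun z =>
    ⟨g z, hanti.injective (by rw [hgZ])⟩
  have hZcont : Continuous Z := by
    have hm : Monotone (fun y => -Z y) := by
      intro a b hab
      rcases eq_or_lt_of_le hab with rfl | h
      · exact le_rfl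
      · exact le_of_lt (neg_lt_neg (hZanti h))
    have hs : Function.Surjective (fun y => -Z y) := by
      intro z
      obtain ⟨y, hy⟩ := hZsurj (-z)
      exact ⟨y, by show -Z y = z; rw [hy]; ring⟩
    have hc := hm.continuous_of_surjective hs
    have : Continuous (fun y => -(-Z y)) := hc.neg
    simpa using this
  have hZd : ∀ y : ℝ, HasDerivAt Z (t - 3 * (Z y) ^ 2)⁻¹ y := fun y =>
    HasDerivAt.of_local_left_inverse hZcont.continuousAt (hg' (Z y))
      (ne_of_lt (hd (Z y))) (Filter.Eventually.of_forall hgZ)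
  have hD1 : deriv Z = fun y => (t - 3 * (Z y) ^ 2)⁻¹ := funext fun y => (hZd y).deriv
  have hu : ∀ y : ℝ, HasDerivAt (fun y => t - 3 * (Z y) ^ 2)
      (-(6 * Z y) * (t - 3 * (Z y) ^ 2)⁻¹) y := by
    intro y
    have h2 := ((hZd y).pow 2).const_mul 3
    have := (hasDerivAt_const y t).sub h2
    refine this.congr_deriv ?_
    norm_num
    ring
  have hd2 : ∀ y : ℝ, HasDerivAt (deriv Z) (6 * Z y / (t - 3 * (Z y) ^ 2) ^ 3) y := by
    intro y
    rw [hD1]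
    have := (hu y).inv (ne_of_lt (hd (Z y)))
    refine this.congr_deriv ?_
    have hne := ne_of_lt (hd (Z y))
    field_simp
  have hD2 : deriv (deriv Z) = fun y => 6 * Z y / (t - 3 * (Z y) ^ 2) ^ 3 :=
    funext fun y => (hd2 y).deriv
  set w := Z x with hw
  set d := t - 3 * w ^ 2 with hdd
  have hdneg : d < 0 := hd w
  have hne : d ≠ 0 := ne_of_lt hdneg
  have hd3 : HasDerivAt (deriv (deriv Z))
      (6 / d ^ 4 + 108 * w ^ 2 / d ^ 5) x := by
    rw [hD2]
    have hnum : HasDerivAt (fun y => 6 * Z y) (6 * d⁻¹) x := by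
      simpa [hdd] using (hZd x).const_mul 6
    have hden : HasDerivAt (fun y => (t - 3 * (Z y) ^ 2) ^ 3)
        (3 * d ^ 2 * (-(6 * w) * d⁻¹)) x := by
      have := (hu x).pow 3
      refine this.congr_deriv ?_; simp only [← hw, ← hdd]; norm_num
    have := hnum.div hden (pow_ne_zero 3 hne)
    refine this.congr_deriv ?_
    simp only [← hw, ← hdd]
    field_simp
    ring
  have hval : deriv (deriv (deriv Z)) x = 6 / d ^ 4 + 108 * w ^ 2 / d ^ 5 := hd3.deriv
  have hp : (0:ℝ) < 3 * w ^ 2 - t := by nlinarith [sq_nonneg w]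
  have hd4 : (0:ℝ) < d ^ 4 := by
    have := pow_pos (neg_pos.mpr hdneg) 4
    nlinarith [this]
  have ht4 : (0:ℝ) < t ^ 4 := by
    have := pow_pos (neg_pos.mpr ht) 4
    nlinarith [this]
  have heq : deriv (deriv (deriv Z)) x
      = 6 / d ^ 4 - 108 * w ^ 2 / (d ^ 4 * (3 * w ^ 2 - t)) := by
    rw [hval]
    have hpne : (3 * w ^ 2 - t) ≠ 0 := ne_of_gt hp
    rw [show 3 * w ^ 2 - t = -d by rw [hdd]; ring]
    field_simp
    ring
  have hupper : deriv (deriv (deriv Z)) x ≤ 6 / d ^ 4 := by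
    rw [heq]
    have : 0 ≤ 108 * w ^ 2 / (d ^ 4 * (3 * w ^ 2 - t)) := by positivity
    linarith
  have hlower : -36 / d ^ 4 ≤ deriv (deriv (deriv Z)) x := by
    rw [heq]
    rw [div_sub_div _ _ (ne_of_gt hd4) (ne_of_gt (mul_pos hd4 hp)),
      div_le_div_iff₀ hd4 (mul_pos hd4 (mul_pos hd4 hp))]
    nlinarith [mul_nonneg (mul_pos hd4 hd4).le
      (by nlinarith : (0:ℝ) ≤ 42 * (3 * w ^ 2 - t) - 108 * w ^ 2)]
  have hdtle : d ≤ t := by nlinarith [sq_nonneg w]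
  have h1 : (-t) ^ 4 ≤ (-d) ^ 4 := pow_le_pow_left₀ (by linarith) (by linarith) 4
  have hdt4 : t ^ 4 ≤ d ^ 4 := by nlinarith [h1]
  have hmono : 36 / d ^ 4 ≤ 36 / t ^ 4 :=
    div_le_div_of_nonneg_left (by norm_num) ht4 hdt4
  refine ⟨heq, ⟨hlower, hupper⟩, ?_⟩
  rw [abs_le]
  constructor
  · have : -(36 / t ^ 4) ≤ -36 / d ^ 4 := by
      rw [neg_div]
      linarith
    linarith
  · have : 6 / d ^ 4 ≤ 36 / d ^ 4 := by
      apply (div_le_div_iff_of_pos_right hd4).mpr; norm_num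
    linarith
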